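/- Let G be a simple graph with a proper edge coloring α using colors {1,...,t}, let u be a vertex, and let X_u(α,v) = (ux_0, ux_1, ..., ux_p) be an α-fan at u starting with ux_0 = uv such that the color m_α(x_p) missing at x_p is also missing at u (i.e., the fan is a 'path'). Then the coloring obtained by recoloring each edge ux_i with the color m_α(x_i) (the color missing at x_i) for i = 0,...,p, leaving all other edges unchanged, is a proper edge coloring of G. -/
import Mathlib


open SimpleGraph

/-- A proper edge coloring: edges of `G` sharing a vertex get different colors. -/
def IsProperEdgeColoring {V : Type*} (G : SimpleGraph V) {t : ℕ} (c : Sym2 V → Fin t) : Prop :=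
  ∀ e₁ ∈ G.edgeSet, ∀ e₂ ∈ G.edgeSet, e₁ ≠ e₂ → (∃ v, v ∈ e₁ ∧ v ∈ e₂) → c e₁ ≠ c e₂

/-- The chromatic index: least number of colors in a proper edge coloring. -/
noncomputable def chromaticIndex {V : Type*} (G : SimpleGraph V) : ℕ :=
  sInf {t | ∃ c : Sym2 V → Fin t, IsProperEdgeColoring G c}

/-- Color `c` is missing at vertex `w` under coloring `α`. -/
def MissingAt {V : Type*} (G : SimpleGraph V) {t : ℕ} (α : Sym2 V → Fin t) (c : Fin t)
    (w : V) : Prop :=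
  ∀ e ∈ G.edgeSet, w ∈ e → α e ≠ c

/-- The subgraph `K_α(a,b)` induced by the edges colored `a` or `b`. -/
def bicolored {V : Type*} (G : SimpleGraph V) {t : ℕ} (α : Sym2 V → Fin t) (a b : Fin t) :
    SimpleGraph V :=
  SimpleGraph.fromEdgeSet {e | e ∈ G.edgeSet ∧ (α e = a ∨ α e = b)}

/-- `β` is obtained from `α` by a single Kempe change: swapping two colors `a`, `b` on a
connected component of the bicolored subgraph `K_α(a,b)`. -/
def IsKempeSwap {V : Type*} (G : SimpleGraph V) {t : ℕ} (α β : Sym2 V → Fin t) : Prop :=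
  ∃ a b : Fin t, ∃ C : (bicolored G α a b).ConnectedComponent,
    (∀ e ∈ G.edgeSet, (α e = a ∨ α e = b) →
      (∀ v ∈ e, (bicolored G α a b).connectedComponentMk v = C) →
      ((α e = a ∧ β e = b) ∨ (α e = b ∧ β e = a))) ∧
    (∀ e : Sym2 V, (e ∉ G.edgeSet ∨ (α e ≠ a ∧ α e ≠ b) ∨
        ∃ v ∈ e, (bicolored G α a b).connectedComponentMk v ≠ C) → β e = α e)

/-- Kempe equivalence: reachability by a sequence of Kempe changes. -/
def KempeEquiv {V : Type*} (G : SimpleGraph V) {t : ℕ} (α β : Sym2 V → Fin t) : Prop :=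
  Relation.ReflTransGen (IsKempeSwap G) α β

/-- `G` is chordless: in every cycle, any two nonconsecutive vertices are nonadjacent. -/
def Chordless {V : Type*} (G : SimpleGraph V) : Prop :=
  ∀ n : ℕ, 3 ≤ n → ∀ c : ZMod n → V, Function.Injective c →
    (∀ i, G.Adj (c i) (c (i + 1))) →
    ∀ i j : ZMod n, j ≠ i → j ≠ i + 1 → i ≠ j + 1 → ¬ G.Adj (c i) (c j)

/-- An `α`-fan at `u`: edges `u x₀, …, u xₚ` with `m i` a color missing at `x i`
and `α (u x_{i+1}) = m i`. -/
structure IsFan {V : Type*} (G : SimpleGraph V) {t : ℕ} (α : Sym2 V → Fin t)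
    (u : V) (p : ℕ) (x : ℕ → V) (m : ℕ → Fin t) : Prop where
  adj : ∀ i ≤ p, G.Adj u (x i)
  inj : ∀ i ≤ p, ∀ j ≤ p, x i = x j → i = j
  missing : ∀ i ≤ p, MissingAt G α (m i) (x i)
  succ : ∀ i < p, α s(u, x (i + 1)) = m i

/-- The coloring `X_u^{-1}(α,v)`: each fan edge `u xᵢ` is recolored with `m i`,
all other edges keep their color. -/
def IsFanRecolor {V : Type*} {t : ℕ} (α : Sym2 V → Fin t)
    (u : V) (p : ℕ) (x : ℕ → V) (m : ℕ → Fin t) (β : Sym2 V → Fin t) : Prop :=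
  (∀ i ≤ p, β s(u, x i) = m i) ∧ (∀ e : Sym2 V, (∀ i ≤ p, e ≠ s(u, x i)) → β e = α e)

/-- A cycle fan is saturated if for every `i` the component of `K_α(α(u xᵢ), m_α(u))`
containing `u` also contains `x_{i-1}` (cyclically). -/
def SaturatedCycleFan {V : Type*} (G : SimpleGraph V) {t : ℕ} (α : Sym2 V → Fin t)
    (u : V) (p : ℕ) (x : ℕ → V) (mu : Fin t) : Prop :=
  ∀ i ≤ p, (bicolored G α (α s(u, x i)) mu).connectedComponentMk u =
    (bicolored G α (α s(u, x i)) mu).connectedComponentMk (x (if i = 0 then p else i - 1))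

/-- If the fan `X_u(α,v)` is a path (the color missing at `xₚ` is also missing at `u`),
then the recoloring `X_u^{-1}(α,v)` is a proper edge coloring. -/
theorem stmt4 {V : Type*} (G : SimpleGraph V) {t : ℕ} (α : Sym2 V → Fin t)
    (hα : IsProperEdgeColoring G α) (u : V) (p : ℕ) (x : ℕ → V) (m : ℕ → Fin t)
    (hfan : IsFan G α u p x m) (hpath : MissingAt G α (m p) u)
    (β : Sym2 V → Fin t) (hβ : IsFanRecolor α u p x m β) :
    IsProperEdgeColoring G β := by
  obtain ⟨hβ1, hβ2⟩ := hβ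
  have hxu : ∀ i, i ≤ p → x i ≠ u := fun i hi => (hfan.adj i hi).ne'
  have hmem : ∀ i, i ≤ p → s(u, x i) ∈ G.edgeSet := fun i hi =>
    G.mem_edgeSet.mpr (hfan.adj i hi)
  have hedge : ∀ i, i ≤ p → ∀ j, j ≤ p → s(u, x i) = s(u, x j) → i = j := by
    intro i hi j hj h
    rcases Sym2.eq_iff.mp h with ⟨_, h2⟩ | ⟨h1, _⟩
    · exact hfan.inj i hi j hj h2
    · exact absurd h1.symm (hxu j hj)
  -- no edge at u other than the next fan edge has α-color m i
  have hkey : ∀ i, i ≤ p → ∀ e ∈ G.edgeSet, (e ≠ s(u, x (i+1)) ∨ i = p) → u ∈ e →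
      α e ≠ m i := by
    intro i hi e he hor hu h
    rcases hor with hne | hip
    · rcases lt_or_eq_of_le hi with hip | hip
      · exact hα e he _ (hmem _ hip) hne ⟨u, hu, Sym2.mem_mk_left _ _⟩
          (by rw [h, hfan.succ i hip])
      · exact hpath e he hu (hip ▸ h)
    · exact hpath e he hu (hip ▸ h)
  -- the colors m i are pairwise distinct
  have hm : ∀ i, i ≤ p → ∀ j, j ≤ p → m i = m j → i = j := by
    intro i hi j hj hmeq
    by_contra hne
    rcases lt_or_eq_of_le hi with hip | hip
    · refine hkey j hj s(u, x (i+1)) (hmem _ hip) ?_ (Sym2.mem_mk_left _ _)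
        (by rw [hfan.succ i hip, hmeq])
      rcases lt_or_eq_of_le hj with hjp | hjp
      · exact Or.inl fun h => hne (Nat.succ_injective (hedge _ hip _ hjp h))
      · exact Or.inr hjp
    · rcases lt_or_eq_of_le hj with hjp | hjp
      · exact hkey i hi s(u, x (j+1)) (hmem _ hjp) (Or.inr hip) (Sym2.mem_mk_left _ _)
          (by rw [hfan.succ j hjp, ← hmeq])
      · exact hne (hip.trans hjp.symm)
  intro e₁ he₁ e₂ he₂ hne hv heq
  obtain ⟨v, hv1, hv2⟩ := hv
  by_cases h1 : ∃ i ≤ p, e₁ = s(u, x i)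
  · obtain ⟨i, hi, rfl⟩ := h1
    by_cases h2 : ∃ j ≤ p, e₂ = s(u, x j)
    · obtain ⟨j, hj, rfl⟩ := h2
      rw [hβ1 i hi, hβ1 j hj] at heq
      exact hne (by rw [hm i hi j hj heq])
    · push_neg at h2
      have hb2 : β e₂ = α e₂ := hβ2 e₂ fun j hj => h2 j hj
      rw [hβ1 i hi, hb2] at heq
      rcases Sym2.mem_iff.mp hv1 with hvu | hvx
      · have hne2 : e₂ ≠ s(u, x (i+1)) ∨ i = p := by
          rcases lt_or_eq_of_le hi with hip | hip
          · exact Or.inl (h2 (i+1) hip)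
          · exact Or.inr hip
        exact hkey i hi e₂ he₂ hne2 (hvu ▸ hv2) heq.symm
      · exact hfan.missing i hi e₂ he₂ (hvx ▸ hv2) heq.symm
  · push_neg at h1
    have hb1 : β e₁ = α e₁ := hβ2 e₁ fun j hj => h1 j hj
    by_cases h2 : ∃ j ≤ p, e₂ = s(u, x j)
    · obtain ⟨j, hj, rfl⟩ := h2
      rw [hβ1 j hj, hb1] at heq
      rcases Sym2.mem_iff.mp hv2 with hvu | hvx
      · have hne2 : e₁ ≠ s(u, x (j+1)) ∨ j = p := by
          rcases lt_or_eq_of_le hj with hjp | hjp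
          · exact Or.inl (h1 (j+1) hjp)
          · exact Or.inr hjp
        exact hkey j hj e₁ he₁ hne2 (hvu ▸ hv1) heq
      · exact hfan.missing j hj e₁ he₁ (hvx ▸ hv1) heq
    · push_neg at h2
      have hb2 : β e₂ = α e₂ := hβ2 e₂ fun j hj => h2 j hj
      rw [hb1, hb2] at heq
      exact hα e₁ he₁ e₂ he₂ hne ⟨v, hv1, hv2⟩ heq
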